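/- Let q ∈ ℂ with q ≠ 0 and q^m ≠ 1 for every positive integer m. For every representation of GL_q(2,ℂ) by n×n complex matrices A₁₁, A₁₂, A₂₁, A₂₂, the matrices A₁₁ and A₂₂ are invertible, while A₁₂ and A₂₁ are nilpotent. -/

import Mathlib

open Polynomial Matrix

lemma powsum_zero_of_multiset (s : Multiset ℂ)
    (h : ∀ k : ℕ, 1 ≤ k → (s.map (· ^ k)).sum = 0) : ∀ x ∈ s, x = 0 := by
  by_contra hcon
  push_neg at hcon
  obtain ⟨x0, hx0s, hx0⟩ := hcon
  classical
  set F : Finset ℂ := s.toFinset.filter (· ≠ 0) with hF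
  have hx0F : x0 ∈ F := by
    simp only [hF, Finset.mem_filter, Multiset.mem_toFinset]
    exact ⟨hx0s, hx0⟩
  set r := F.card with hr
  let e : {a // a ∈ F} ≃ Fin r := F.equivFin
  let x : Fin r → ℂ := fun i => ((e.symm i : {a // a ∈ F}) : ℂ)
  have hxinj : Function.Injective x := by
    intro i j hij
    exact e.symm.injective (Subtype.ext hij)
  have hxF : ∀ i, x i ∈ F := fun i => (e.symm i).2
  have key : ∀ k : ℕ, 1 ≤ k → ∑ t ∈ F, (s.count t : ℂ) * t ^ k = 0 := by
    intro k hk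
    have h2 := h k hk
    rw [Finset.sum_multiset_map_count] at h2
    have h3 : ∑ t ∈ F, (s.count t) • t ^ k = ∑ t ∈ s.toFinset, (s.count t) • t ^ k := by
      apply Finset.sum_filter_of_ne
      intro t _ ht
      intro ht0
      apply ht
      rw [ht0, zero_pow (by omega : k ≠ 0), smul_zero]
    rw [← h3] at h2
    simpa [nsmul_eq_mul] using h2
  let c : Fin r → ℂ := fun i => (s.count (x i) : ℂ) * x i
  have hV : (Matrix.vandermonde x)ᵀ.mulVec c = 0 := by
    funext j
    have := key ((j : ℕ) + 1) (by omega)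
    rw [← Finset.sum_coe_sort F (fun t => (s.count (t : ℂ) : ℂ) * (t : ℂ) ^ ((j : ℕ) + 1))] at this
    rw [← Equiv.sum_comp e.symm
      (fun a => (s.count ((a : {a // a ∈ F}) : ℂ) : ℂ) * ((a : {a // a ∈ F}) : ℂ) ^ ((j : ℕ) + 1))] at this
    simp only [Matrix.mulVec, Matrix.transpose_apply, Matrix.vandermonde, Pi.zero_apply]
    rw [show (0 : ℂ) = ∑ i : Fin r, (s.count (x i) : ℂ) * x i ^ ((j : ℕ) + 1) from this.symm]
    apply Finset.sum_congr rfl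
    intro i _
    simp only [Matrix.of_apply, dotProduct]
    ring
  have hc : c = 0 := by
    apply Matrix.eq_zero_of_mulVec_eq_zero _ hV
    rw [Matrix.det_transpose]
    exact Matrix.det_vandermonde_ne_zero_iff.mpr hxinj
  have hi0 : c (e ⟨x0, hx0F⟩) = 0 := by rw [hc]; rfl
  have hx0eq : x (e ⟨x0, hx0F⟩) = x0 := by simp [x, e]
  have hi0' : (s.count x0 : ℂ) * x0 = 0 := by
    simpa only [c, hx0eq] using hi0
  rcases mul_eq_zero.mp hi0' with h1 | h1
  · have : s.count x0 ≠ 0 := by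
      simpa [Multiset.count_eq_zero] using hx0s
    exact this (by exact_mod_cast h1)
  · exact hx0 h1

lemma eval_charpoly_mat {m : ℕ} (M : Matrix (Fin m) (Fin m) ℂ) (a : ℂ) :
    (M.charpoly).eval a = (Matrix.scalar (Fin m) a - M).det := by
  rw [Matrix.charpoly, eval_det, matPolyEquiv_charmatrix]
  simp

lemma det_sub_scalar {m : ℕ} (M : Matrix (Fin m) (Fin m) ℂ) (a : ℂ) :
    (M - Matrix.scalar (Fin m) a).det
      = (M.charpoly.roots.map (fun l => l - a)).prod := by
  have h1 : M - Matrix.scalar (Fin m) a = -(Matrix.scalar (Fin m) a - M) :=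
    (neg_sub _ _).symm
  have hs : M.charpoly = (M.charpoly.roots.map (fun l => X - C l)).prod :=
    (IsAlgClosed.splits _).eq_prod_roots_of_monic M.charpoly_monic
  have hcard : M.charpoly.roots.card = m := by
    rw [Polynomial.splits_iff_card_roots.mp (IsAlgClosed.splits _),
      Matrix.charpoly_natDegree_eq_dim M, Fintype.card_fin]
  have heval : (M.charpoly).eval a = (M.charpoly.roots.map (fun l => a - l)).prod := by
    conv_lhs => rw [hs]
    rw [Polynomial.eval_multiset_prod, Multiset.map_map]
    simp [Function.comp]
  rw [h1, Matrix.det_neg, ← eval_charpoly_mat, heval, Fintype.card_fin]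
  have : (Multiset.map (fun l => l - a) M.charpoly.roots)
      = Multiset.map (fun l => (-1) * (a - l)) M.charpoly.roots := by
    apply Multiset.map_congr rfl
    intro y _; ring
  rw [this, show (fun l => (-1 : ℂ) * (a - l)) = fun l => ((fun _ => (-1:ℂ)) l) * ((fun l => a - l) l) from rfl,
    Multiset.prod_map_mul, Multiset.map_const', Multiset.prod_replicate, hcard]

lemma det_aeval_pow {m : ℕ} (M : Matrix (Fin m) (Fin m) ℂ) {k : ℕ} (hk : 1 ≤ k) (a : ℂ) :
    (M ^ k - Matrix.scalar (Fin m) a).det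
      = (M.charpoly.roots.map (fun l => l ^ k - a)).prod := by
  set P : ℂ[X] := X ^ k - C a with hPdef
  have hPm : P.Monic := monic_X_pow_sub_C a (by omega)
  have hPs : P = (P.roots.map (fun r => X - C r)).prod :=
    (IsAlgClosed.splits _).eq_prod_roots_of_monic hPm
  -- the matrix M^k - a•1 as a list product
  set l : List ℂ := P.roots.toList with hldef
  have hlcoe : (l : Multiset ℂ) = P.roots := Multiset.coe_toList _
  have haevalP : Polynomial.aeval M P = M ^ k - Matrix.scalar (Fin m) a := by
    simp [hPdef, Polynomial.aeval_X_pow, Matrix.scalar]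
    rfl
  have hPl : P = (l.map (fun r => X - C r)).prod := by
    rw [hPs, ← hlcoe, Multiset.map_coe, Multiset.prod_coe]
  have haeval2 : Polynomial.aeval M P
      = (l.map (fun r => M - Matrix.scalar (Fin m) r)).prod := by
    rw [hPl]
    rw [map_list_prod (Polynomial.aeval M)]
    congr 1
    rw [List.map_map]
    apply List.map_congr_left
    intro r _
    simp [Matrix.scalar]
    rfl
  have hdet : (M ^ k - Matrix.scalar (Fin m) a).det
      = (l.map (fun r => (M - Matrix.scalar (Fin m) r).det)).prod := by
    rw [← haevalP, haeval2]
    have hh := List.prod_hom (l.map (fun r => M - Matrix.scalar (Fin m) r))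
      (Matrix.detMonoidHom (n := Fin m) (R := ℂ))
    exact hh.symm.trans (by rw [List.map_map]; rfl)
  -- now pass to multisets and use det_sub_scalar
  have hdet2 : (M ^ k - Matrix.scalar (Fin m) a).det
      = (P.roots.map (fun r => ((M.charpoly.roots.map (fun lam => lam - r)).prod))).prod := by
    rw [hdet, show (l.map (fun r => (M - Matrix.scalar (Fin m) r).det)).prod
        = ((l : Multiset ℂ).map (fun r => (M - Matrix.scalar (Fin m) r).det)).prod by
      rw [Multiset.map_coe, Multiset.prod_coe], hlcoe]
    apply congrArg
    apply Multiset.map_congr rfl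
    intro r _
    exact det_sub_scalar M r
  rw [hdet2, Multiset.prod_map_prod_map]
  apply congrArg
  apply Multiset.map_congr rfl
  intro lam _
  have h1 : P.eval lam = (P.roots.map (fun r => lam - r)).prod := by
    conv_lhs => rw [hPs]
    rw [Polynomial.eval_multiset_prod, Multiset.map_map]
    simp [Function.comp]
  have h2 : P.eval lam = lam ^ k - a := by simp [hPdef]
  rw [← h1, h2]

lemma card_roots_charpoly {m : ℕ} (M : Matrix (Fin m) (Fin m) ℂ) :
    M.charpoly.roots.card = m := by
  rw [Polynomial.splits_iff_card_roots.mp (IsAlgClosed.splits _),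
    Matrix.charpoly_natDegree_eq_dim M, Fintype.card_fin]

lemma neg_prod_ms (s : Multiset ℂ) (f : ℂ → ℂ) :
    (s.map (fun x => -f x)).prod = (-1 : ℂ) ^ Multiset.card s * (s.map f).prod := by
  rw [show (fun x => -f x) = fun x => ((fun _ => (-1:ℂ)) x) * f x by funext x; ring,
    Multiset.prod_map_mul, Multiset.map_const', Multiset.prod_replicate]

lemma charpoly_pow_eq {m : ℕ} (M : Matrix (Fin m) (Fin m) ℂ) {k : ℕ} (hk : 1 ≤ k) :
    (M ^ k).charpoly = ((M.charpoly.roots.map (· ^ k)).map (fun l => X - C l)).prod := by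
  apply Polynomial.funext
  intro a
  rw [eval_charpoly_mat, Polynomial.eval_multiset_prod,
    show Matrix.scalar (Fin m) a - M ^ k = -(M ^ k - Matrix.scalar (Fin m) a) from
      (neg_sub _ _).symm,
    Matrix.det_neg, det_aeval_pow M hk a, Fintype.card_fin, Multiset.map_map, Multiset.map_map]
  have h2 : (M.charpoly.roots.map (fun l => l ^ k - a)).prod
      = (-1:ℂ) ^ m * (M.charpoly.roots.map (fun l => a - l ^ k)).prod := by
    rw [show (fun l : ℂ => l ^ k - a) = fun l : ℂ => -((fun l : ℂ => a - l ^ k) l) by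
      funext l; ring, neg_prod_ms, card_roots_charpoly]
  rw [h2, ← mul_assoc, ← mul_pow]
  simp [Function.comp]

lemma trace_pow_eq {m : ℕ} (M : Matrix (Fin m) (Fin m) ℂ) {k : ℕ} (hk : 1 ≤ k) :
    Matrix.trace (M ^ k) = ((M.charpoly.roots).map (· ^ k)).sum := by
  rw [Matrix.trace_eq_sum_roots_charpoly, charpoly_pow_eq M hk,
    Polynomial.roots_multiset_prod_X_sub_C]

lemma isNilpotent_of_trace_pow {m : ℕ} (M : Matrix (Fin m) (Fin m) ℂ)
    (h : ∀ k : ℕ, 1 ≤ k → Matrix.trace (M ^ k) = 0) : IsNilpotent M := by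
  have hz : ∀ x ∈ M.charpoly.roots, x = 0 := by
    apply powsum_zero_of_multiset
    intro k hk
    rw [← trace_pow_eq M hk]
    exact h k hk
  have hrep : M.charpoly.roots = Multiset.replicate m 0 :=
    Multiset.eq_replicate.mpr ⟨card_roots_charpoly M, fun b hb => hz b hb⟩
  have hcp : M.charpoly = X ^ m := by
    rw [(IsAlgClosed.splits _).eq_prod_roots_of_monic M.charpoly_monic, hrep]
    simp [Multiset.map_replicate, Multiset.prod_replicate]
  refine ⟨m, ?_⟩
  have hch := M.aeval_self_charpoly
  rwa [hcp, map_pow, Polynomial.aeval_X] at hch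


/-- A representation of the algebra `GL_q(2,ℂ)` by `n×n` complex matrices:
the six defining relations together with invertibility of the quantum
determinant `A₁₁A₂₂ − qA₁₂A₂₁`. -/
def IsGLqRep {n : ℕ} (q : ℂ) (A₁₁ A₁₂ A₂₁ A₂₂ : Matrix (Fin n) (Fin n) ℂ) : Prop :=
  A₁₁ * A₁₂ = q • (A₁₂ * A₁₁) ∧
  A₁₁ * A₂₁ = q • (A₂₁ * A₁₁) ∧
  A₁₂ * A₂₂ = q • (A₂₂ * A₁₂) ∧
  A₂₁ * A₂₂ = q • (A₂₂ * A₂₁) ∧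
  A₁₂ * A₂₁ = A₂₁ * A₁₂ ∧
  A₁₁ * A₂₂ - A₂₂ * A₁₁ = (q - q⁻¹) • (A₁₂ * A₂₁) ∧
  IsUnit (A₁₁ * A₂₂ - q • (A₁₂ * A₂₁))


/-- in every finite dimensional representation of `GL_q(2,ℂ)`,
`q^m ≠ 1`, the matrices `A₁₁`, `A₂₂` are invertible and `A₁₂`, `A₂₁` are
nilpotent. -/
theorem glq_rep_diagonal_invertible_offdiagonal_nilpotent {n : ℕ} (q : ℂ) (hq0 : q ≠ 0)
    (hq : ∀ m : ℕ, 0 < m → q ^ m ≠ 1)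
    (A₁₁ A₁₂ A₂₁ A₂₂ : Matrix (Fin n) (Fin n) ℂ)
    (hrep : IsGLqRep q A₁₁ A₁₂ A₂₁ A₂₂) :
    IsUnit A₁₁ ∧ IsUnit A₂₂ ∧ IsNilpotent A₁₂ ∧ IsNilpotent A₂₁ := by
  obtain ⟨h1, h2, h3, h4, h5, h6, hD⟩ := hrep
  set N : Matrix (Fin n) (Fin n) ℂ := A₁₂ * A₂₁ with hN
  set Dm : Matrix (Fin n) (Fin n) ℂ := A₁₁ * A₂₂ - q • N with hDm
  have hqinv : q * q⁻¹ = 1 := mul_inv_cancel₀ hq0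
  have hq2 : q * q ≠ 1 := by
    have := hq 2 (by omega); rwa [pow_two] at this
  -- A₁₁A₂₂ and A₂₂A₁₁ in terms of Dm and N
  have fC : A₁₁ * A₂₂ = Dm + q • N := by rw [hDm]; abel
  have fE : A₂₂ * A₁₁ = Dm + q⁻¹ • N := by
    have h6' : A₂₂ * A₁₁ = A₁₁ * A₂₂ - (q - q⁻¹) • N := by
      rw [← h6]; abel
    rw [h6', hDm, sub_smul]; abel
  -- commutation of A₁₁ and A₂₂ with N
  have f2 : A₁₁ * N = (q * q) • (N * A₁₁) := by
    calc A₁₁ * (A₁₂ * A₂₁) = (A₁₁ * A₁₂) * A₂₁ := (mul_assoc _ _ _).symm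
      _ = q • ((A₁₂ * A₁₁) * A₂₁) := by rw [h1, smul_mul_assoc]
      _ = q • (A₁₂ * (A₁₁ * A₂₁)) := by rw [mul_assoc]
      _ = q • (A₁₂ * (q • (A₂₁ * A₁₁))) := by rw [h2]
      _ = (q * q) • ((A₁₂ * A₂₁) * A₁₁) := by
          rw [mul_smul_comm, smul_smul, mul_assoc]
  have f3 : N * A₂₂ = (q * q) • (A₂₂ * N) := by
    calc (A₁₂ * A₂₁) * A₂₂ = A₁₂ * (A₂₁ * A₂₂) := mul_assoc _ _ _
      _ = A₁₂ * (q • (A₂₂ * A₂₁)) := by rw [h4]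
      _ = q • ((A₁₂ * A₂₂) * A₂₁) := by rw [mul_smul_comm, mul_assoc]
      _ = q • ((q • (A₂₂ * A₁₂)) * A₂₁) := by rw [h3]
      _ = (q * q) • (A₂₂ * (A₁₂ * A₂₁)) := by
          rw [smul_mul_assoc, smul_smul, mul_assoc]
  have f3' : A₂₂ * N = (q⁻¹ * q⁻¹) • (N * A₂₂) := by
    rw [f3, smul_smul]
    rw [show q⁻¹ * q⁻¹ * (q * q) = (q⁻¹ * q) * (q⁻¹ * q) by ring,
      inv_mul_cancel₀ hq0, one_mul, one_smul]
  -- A₁₁ commutes with Dm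
  have fD' : Dm = A₂₂ * A₁₁ - q⁻¹ • N := by rw [fE]; abel
  have f4 : Commute A₁₁ Dm := by
    show A₁₁ * Dm = Dm * A₁₁
    conv_lhs => rw [fD']
    conv_rhs => rw [hDm]
    rw [mul_sub, sub_mul, mul_smul_comm, smul_mul_assoc, f2, smul_smul,
      show q⁻¹ * (q * q) = (q⁻¹ * q) * q by ring, inv_mul_cancel₀ hq0, one_mul,
      ← mul_assoc]
  -- Dm commutes with N
  have f5 : Commute Dm N := by
    show Dm * N = N * Dm
    have fcn : (A₁₁ * A₂₂) * N = N * (A₁₁ * A₂₂) := by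
      rw [mul_assoc, f3', mul_smul_comm, ← mul_assoc, f2, smul_mul_assoc, smul_smul,
        show q⁻¹ * q⁻¹ * (q * q) = (q⁻¹ * q) * (q⁻¹ * q) by ring,
        inv_mul_cancel₀ hq0, one_mul, one_smul, mul_assoc]
    rw [hDm, sub_mul, mul_sub, fcn, smul_mul_assoc, mul_smul_comm]
  -- powers
  have f2pow : ∀ j : ℕ, A₁₁ * N ^ j = ((q * q) ^ j) • (N ^ j * A₁₁) := by
    intro j
    induction j with
    | zero => simp
    | succ j ih =>
      rw [pow_succ, ← mul_assoc, ih, smul_mul_assoc, mul_assoc, f2, mul_smul_comm,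
        smul_smul, ← pow_succ]
      congr 1
      rw [← mul_assoc, ← pow_succ]
  -- key trace identity
  have KT : ∀ a j : ℕ,
      Matrix.trace (Dm ^ (a + 1) * N ^ j) + q⁻¹ * Matrix.trace (Dm ^ a * N ^ (j + 1))
        = (q * q) ^ j *
          (Matrix.trace (Dm ^ (a + 1) * N ^ j) + q * Matrix.trace (Dm ^ a * N ^ (j + 1))) := by
    intro a j
    have e1 : A₁₁ * (Dm ^ a * N ^ j) = ((q * q) ^ j) • ((Dm ^ a * N ^ j) * A₁₁) := by
      rw [← mul_assoc, (f4.pow_right a).eq, mul_assoc, f2pow, mul_smul_comm, mul_assoc]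
    have eDm : Dm * (Dm ^ a * N ^ j) = Dm ^ (a + 1) * N ^ j := by
      rw [← mul_assoc, ← pow_succ']
    have eN : N * (Dm ^ a * N ^ j) = Dm ^ a * N ^ (j + 1) := by
      calc N * (Dm ^ a * N ^ j) = (N * Dm ^ a) * N ^ j := (mul_assoc _ _ _).symm
        _ = (Dm ^ a * N) * N ^ j := by rw [(f5.pow_left a).eq]
        _ = Dm ^ a * (N * N ^ j) := mul_assoc _ _ _
        _ = Dm ^ a * N ^ (j + 1) := by rw [← pow_succ']
    have lhs1 : A₂₂ * (A₁₁ * (Dm ^ a * N ^ j))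
        = Dm ^ (a + 1) * N ^ j + q⁻¹ • (Dm ^ a * N ^ (j + 1)) := by
      calc A₂₂ * (A₁₁ * (Dm ^ a * N ^ j))
          = (A₂₂ * A₁₁) * (Dm ^ a * N ^ j) := (mul_assoc _ _ _).symm
        _ = Dm * (Dm ^ a * N ^ j) + q⁻¹ • (N * (Dm ^ a * N ^ j)) := by
            rw [fE, add_mul, smul_mul_assoc]
        _ = Dm ^ (a + 1) * N ^ j + q⁻¹ • (Dm ^ a * N ^ (j + 1)) := by rw [eDm, eN]
    have rhs1 : A₁₁ * (A₂₂ * (Dm ^ a * N ^ j))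
        = Dm ^ (a + 1) * N ^ j + q • (Dm ^ a * N ^ (j + 1)) := by
      calc A₁₁ * (A₂₂ * (Dm ^ a * N ^ j))
          = (A₁₁ * A₂₂) * (Dm ^ a * N ^ j) := (mul_assoc _ _ _).symm
        _ = Dm * (Dm ^ a * N ^ j) + q • (N * (Dm ^ a * N ^ j)) := by
            rw [fC, add_mul, smul_mul_assoc]
        _ = Dm ^ (a + 1) * N ^ j + q • (Dm ^ a * N ^ (j + 1)) := by rw [eDm, eN]
    have main : Matrix.trace (A₂₂ * (A₁₁ * (Dm ^ a * N ^ j)))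
        = (q * q) ^ j * Matrix.trace (A₁₁ * (A₂₂ * (Dm ^ a * N ^ j))) := by
      rw [e1, Matrix.mul_smul, Matrix.trace_smul, smul_eq_mul]
      congr 1
      rw [← mul_assoc, Matrix.trace_mul_comm]
    rw [lhs1, rhs1] at main
    simpa [Matrix.trace_add, Matrix.trace_smul, smul_eq_mul] using main
  -- vanishing traces for N powers
  have TZ : ∀ j : ℕ, 1 ≤ j → ∀ a : ℕ, Matrix.trace (Dm ^ a * N ^ j) = 0 := by
    intro j
    induction j with
    | zero => exact fun h => absurd h (by omega)
    | succ j ih =>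
      intro _ a
      by_cases hj : j = 0
      · subst hj
        have h0 := KT a 0
        simp only [pow_zero, one_mul, mul_one] at h0
        have h0' : (q⁻¹ - q) * Matrix.trace (Dm ^ a * N ^ (0 + 1)) = 0 := by
          linear_combination h0
        rcases mul_eq_zero.mp h0' with h' | h'
        · exfalso
          apply hq2
          have hqq : q⁻¹ = q := sub_eq_zero.mp h'
          calc q * q = q * q⁻¹ := by rw [hqq]
            _ = 1 := hqinv
        · exact h'
      · have hj1 : 1 ≤ j := by omega
        have h0 := KT a j
        rw [ih hj1 (a + 1)] at h0
        have h0' : (q⁻¹ - (q * q) ^ j * q) * Matrix.trace (Dm ^ a * N ^ (j + 1)) = 0 := by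
          linear_combination h0
        rcases mul_eq_zero.mp h0' with h' | h'
        · exfalso
          apply hq (2 * j + 2) (by omega)
          have hs : (q * q) ^ j * q = q⁻¹ := (sub_eq_zero.mp h').symm
          calc q ^ (2 * j + 2) = ((q * q) ^ j * q) * q := by ring
            _ = q⁻¹ * q := by rw [hs]
            _ = 1 := inv_mul_cancel₀ hq0
        · exact h'
  -- N is nilpotent
  have hNnil : IsNilpotent N := by
    apply isNilpotent_of_trace_pow
    intro k hk
    have := TZ k hk 0
    simpa using this
  -- A₁₁ * A₂₂ is a unit
  have hCunit : IsUnit (A₁₁ * A₂₂) := by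
    rw [fC]
    have h1n : IsNilpotent (q • N) := hNnil.smul q
    have hcomm : Commute (q • N) Dm := (f5.symm).smul_left q
    rw [add_comm Dm (q • N)]
    exact h1n.isUnit_add_right_of_commute hD hcomm
  have hdet : IsUnit ((A₁₁).det * (A₂₂).det) := by
    rw [← Matrix.det_mul]
    exact (Matrix.isUnit_iff_isUnit_det _).mp hCunit
  have h11 : IsUnit A₁₁ :=
    (Matrix.isUnit_iff_isUnit_det _).mpr (isUnit_of_mul_isUnit_left hdet)
  have h22 : IsUnit A₂₂ :=
    (Matrix.isUnit_iff_isUnit_det _).mpr (isUnit_of_mul_isUnit_right hdet)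
  -- nilpotency of A₁₂ and A₂₁
  obtain ⟨u, hu⟩ := id h11
  have inv1 : (↑u⁻¹ : Matrix (Fin n) (Fin n) ℂ) * A₁₁ = 1 := by rw [← hu]; exact u.inv_mul
  have inv2 : A₁₁ * (↑u⁻¹ : Matrix (Fin n) (Fin n) ℂ) = 1 := by rw [← hu]; exact u.mul_inv
  have offdiag : ∀ B : Matrix (Fin n) (Fin n) ℂ,
      A₁₁ * B = q • (B * A₁₁) → IsNilpotent B := by
    intro B hB
    have fpow : ∀ k : ℕ, A₁₁ * B ^ k = (q ^ k) • (B ^ k * A₁₁) := by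
      intro k
      induction k with
      | zero => simp
      | succ k ih =>
        rw [pow_succ, ← mul_assoc, ih, smul_mul_assoc, mul_assoc, hB, mul_smul_comm,
          smul_smul, ← pow_succ]
        congr 1
        rw [← mul_assoc, ← pow_succ]
    apply isNilpotent_of_trace_pow
    intro k hk
    have step : Matrix.trace (B ^ k) = q ^ k * Matrix.trace (B ^ k) := by
      conv_lhs => rw [← one_mul (B ^ k), ← inv1, mul_assoc, fpow k]
      rw [Matrix.mul_smul, Matrix.trace_smul, smul_eq_mul]
      congr 1
      rw [← mul_assoc, Matrix.trace_mul_comm, ← mul_assoc, inv2, one_mul]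
    have h0' : (1 - q ^ k) * Matrix.trace (B ^ k) = 0 := by linear_combination step
    rcases mul_eq_zero.mp h0' with h' | h'
    · exact absurd (by linear_combination -h' : q ^ k = 1) (hq k (by omega))
    · exact h'
  exact ⟨h11, h22, offdiag A₁₂ h1, offdiag A₂₁ h2⟩
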